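/- arXiv:1107.1595 — 2 statements merged into one kernel-verified Lean document; each statement's English description precedes it below -/
import Mathlib

section
/- Let I ⊆ ℝ be an open interval and let u, E, B : I × ℝ³ → ℝ³ and ρ : I × ℝ³ → ℝ be C² functions satisfying, pointwise on I × ℝ³, the equations ∂_t u + (u·∇)u = −c_s² ρ∇ρ − E − u×B and ∂_t B + ∇×E = 0 (where c_s > 0 is a constant). Then the quantity B − ∇×u satisfies the pointwise identity ∂_t (B − ∇×u) = ∇×( u × (B − ∇×u) ) on I × ℝ³. (In particular, the constraint B = ∇×u is formally conserved by the flow.) -/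
noncomputable section

open MeasureTheory Real Filter
open scoped ENNReal NNReal RealInnerProductSpace

/-- Physical / frequency space `ℝ³`. -/
abbrev E3 : Type := EuclideanSpace ℝ (Fin 3)

/-- The vector of `ℝ³` with the three given coordinates. -/
def vec3 (a b c : ℝ) : E3 := (WithLp.equiv 2 (Fin 3 → ℝ)).symm ![a, b, c]

/-- Partial derivative in the `i`-th coordinate direction. -/
def pd {F : Type*} [NormedAddCommGroup F] [NormedSpace ℝ F] (i : Fin 3) (f : E3 → F) (x : E3) :
    F :=
  fderiv ℝ f x (EuclideanSpace.single i 1)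

/-- Divergence of a vector field on `ℝ³`. -/
def divg (v : E3 → E3) (x : E3) : ℝ := ∑ i, pd i (fun y => v y i) x

/-- Curl of a vector field on `ℝ³`. -/
def curl (v : E3 → E3) (x : E3) : E3 :=
  vec3 (pd 1 (fun y => v y 2) x - pd 2 (fun y => v y 1) x)
       (pd 2 (fun y => v y 0) x - pd 0 (fun y => v y 2) x)
       (pd 0 (fun y => v y 1) x - pd 1 (fun y => v y 0) x)

/-- Gradient of a scalar function on `ℝ³`. -/
def grad (f : E3 → ℝ) (x : E3) : E3 := vec3 (pd 0 f x) (pd 1 f x) (pd 2 f x)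

/-- Cross product on `ℝ³`. -/
def cross (a b : E3) : E3 :=
  vec3 (a 1 * b 2 - a 2 * b 1) (a 2 * b 0 - a 0 * b 2) (a 0 * b 1 - a 1 * b 0)

/-- Componentwise Laplacian. -/
def lap {F : Type*} [NormedAddCommGroup F] [NormedSpace ℝ F] (f : E3 → F) (x : E3) : F :=
  ∑ i, pd i (fun y => pd i f y) x

/-- Japanese bracket `⟨ξ⟩_a = √(1 + a²|ξ|²)`. -/
def jap (a : ℝ) (ξ : E3) : ℝ := Real.sqrt (1 + a ^ 2 * ‖ξ‖ ^ 2)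

/-- Japanese bracket of a real number, `⟨t⟩ = √(1 + t²)`. -/
def japT (t : ℝ) : ℝ := Real.sqrt (1 + t ^ 2)

/-! ### Auxiliary lemmas -/


lemma vec3_zero (a b c : ℝ) : vec3 a b c 0 = a := rfl
lemma vec3_one (a b c : ℝ) : vec3 a b c 1 = b := rfl
lemma vec3_two (a b c : ℝ) : vec3 a b c 2 = c := rfl
lemma e3_sub_apply (a b : E3) (i : Fin 3) : (a - b) i = a i - b i := rfl
lemma e3_neg_apply (a : E3) (i : Fin 3) : (-a) i = -(a i) := rfl
lemma e3_smul_apply (r : ℝ) (a : E3) (i : Fin 3) : (r • a) i = r * a i := rfl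

section pdrules
variable {f g : E3 → ℝ} {x : E3} {i : Fin 3} {c : ℝ}

lemma pd_def (f : E3 → ℝ) (x : E3) (i : Fin 3) :
    pd i f x = fderiv ℝ f x (EuclideanSpace.single i 1) := rfl

lemma pd_sub (hf : DifferentiableAt ℝ f x) (hg : DifferentiableAt ℝ g x) :
    pd i (fun y => f y - g y) x = pd i f x - pd i g x := by
  simp [pd, fderiv_fun_sub hf hg]

lemma pd_add (hf : DifferentiableAt ℝ f x) (hg : DifferentiableAt ℝ g x) :
    pd i (fun y => f y + g y) x = pd i f x + pd i g x := by
  simp [pd, fderiv_fun_add hf hg]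

lemma pd_mul (hf : DifferentiableAt ℝ f x) (hg : DifferentiableAt ℝ g x) :
    pd i (fun y => f y * g y) x = pd i f x * g x + f x * pd i g x := by
  simp [pd, fderiv_fun_mul hf hg]; ring

lemma pd_neg : pd i (fun y => -f y) x = -pd i f x := by
  simp [pd, fderiv_neg]

lemma pd_const_mul (hf : DifferentiableAt ℝ f x) :
    pd i (fun y => c * f y) x = c * pd i f x := by
  simp [pd, fderiv_const_mul hf c]

lemma pd_const : pd i (fun _ : E3 => c) x = 0 := by simp [pd]

lemma pd_differentiableAt (hf : ContDiffAt ℝ 2 f x) (j : Fin 3) :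
    DifferentiableAt ℝ (fun y => pd j f y) x := by
  have h1 : DifferentiableAt ℝ (fderiv ℝ f) x :=
    (hf.fderiv_right (le_refl 2)).differentiableAt one_ne_zero
  exact h1.clm_apply (differentiableAt_const _)

end pdrules

section sym
variable {H : Type*} [NormedAddCommGroup H] [NormedSpace ℝ H]

lemma fderiv_dir_apply {G : H → ℝ} {p : H} (hD : DifferentiableAt ℝ (fderiv ℝ G) p)
    (v w : H) :
    fderiv ℝ (fun q => fderiv ℝ G q v) p w = fderiv ℝ (fderiv ℝ G) p w v := by
  have h : HasFDerivAt (fun q => fderiv ℝ G q v)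
      (((ContinuousLinearMap.apply ℝ ℝ v)).comp (fderiv ℝ (fderiv ℝ G) p)) p :=
    ((ContinuousLinearMap.apply ℝ ℝ v).hasFDerivAt).comp p hD.hasFDerivAt
  rw [h.fderiv]; rfl

lemma sym2 {G : H → ℝ} {p : H} (hG : ContDiffAt ℝ 2 G p) (v w : H) :
    fderiv ℝ (fun q => fderiv ℝ G q v) p w = fderiv ℝ (fun q => fderiv ℝ G q w) p v := by
  have hD : DifferentiableAt ℝ (fderiv ℝ G) p :=
    (hG.fderiv_right (le_refl 2)).differentiableAt one_ne_zero
  rw [fderiv_dir_apply hD, fderiv_dir_apply hD, (hG.isSymmSndFDerivAt (by simp [minSmoothness_of_isRCLikeNormedField])).eq]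

end sym

lemma pd_comm {f : E3 → ℝ} {x : E3} (hf : ContDiffAt ℝ 2 f x) (i j : Fin 3) :
    pd i (fun y => pd j f y) x = pd j (fun y => pd i f y) x :=
  sym2 hf (EuclideanSpace.single j 1) (EuclideanSpace.single i 1)

section slice
variable {F : Type*} [NormedAddCommGroup F] [NormedSpace ℝ F]
variable {G : ℝ × E3 → F} {t : ℝ} {x : E3}

lemma hasDerivAt_slice (hG : DifferentiableAt ℝ G (t, x)) :
    HasDerivAt (fun s => G (s, x)) (fderiv ℝ G (t, x) (1, 0)) t := by
  have h1 : HasDerivAt (fun s : ℝ => ((s : ℝ), x)) ((1 : ℝ), (0 : E3)) t :=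
    (hasDerivAt_id t).prodMk (hasDerivAt_const t x)
  exact hG.hasFDerivAt.comp_hasDerivAt t h1

lemma contDiffAt_slice (hG : ContDiffAt ℝ 2 G (t, x)) :
    ContDiffAt ℝ 2 (fun y => G (t, y)) x :=
  hG.comp x ((contDiff_const.prodMk contDiff_id).contDiffAt)

end slice

lemma pd_slice {G : ℝ × E3 → ℝ} {t : ℝ} {x : E3} (hG : DifferentiableAt ℝ G (t, x)) (i : Fin 3) :
    pd i (fun y => G (t, y)) x = fderiv ℝ G (t, x) (0, EuclideanSpace.single i 1) := by
  have h1 : HasFDerivAt (fun y : E3 => ((t : ℝ), y))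
      (((0 : E3 →L[ℝ] ℝ)).prod (ContinuousLinearMap.id ℝ E3)) x :=
    (hasFDerivAt_const t x).prodMk (hasFDerivAt_id x)
  have h2 : HasFDerivAt (fun y : E3 => G (t, y))
      ((fderiv ℝ G (t, x)).comp (((0 : E3 →L[ℝ] ℝ)).prod (ContinuousLinearMap.id ℝ E3))) x :=
    hG.hasFDerivAt.comp x h1
  rw [pd, h2.fderiv]; rfl

lemma deriv_proj {v : ℝ → E3} {t : ℝ} (hv : DifferentiableAt ℝ v t) (k : Fin 3) :
    deriv (fun s => v s k) t = deriv v t k := by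
  have h : HasDerivAt (fun s => v s k) (deriv v t k) t :=
    (EuclideanSpace.proj (𝕜 := ℝ) k).hasFDerivAt.comp_hasDerivAt t hv.hasDerivAt
  exact h.deriv

lemma fderiv_proj {f : E3 → E3} {x : E3} (hf : DifferentiableAt ℝ f x) (w : E3) (k : Fin 3) :
    fderiv ℝ f x w k = fderiv ℝ (fun y => f y k) x w := by
  have h : HasFDerivAt (fun y => f y k)
      ((EuclideanSpace.proj (𝕜 := ℝ) k).comp (fderiv ℝ f x)) x :=
    ((EuclideanSpace.proj (𝕜 := ℝ) k).hasFDerivAt).comp x hf.hasFDerivAt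
  rw [h.fderiv]; rfl

lemma clm_expand (L : E3 →L[ℝ] ℝ) (v : E3) :
    L v = v 0 * L (EuclideanSpace.single 0 1) + v 1 * L (EuclideanSpace.single 1 1)
      + v 2 * L (EuclideanSpace.single 2 1) := by
  have hv : v = v 0 • EuclideanSpace.single 0 1 + v 1 • EuclideanSpace.single 1 1
      + v 2 • EuclideanSpace.single 2 1 := by
    ext k; fin_cases k <;> simp [EuclideanSpace.single_apply]
  conv_lhs => rw [hv]
  simp [smul_eq_mul]

lemma hasDerivAt_pd_slice {G : ℝ → E3 → ℝ} {I : Set ℝ} (hI : IsOpen I)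
    (hG : ContDiffOn ℝ 2 (fun p : ℝ × E3 => G p.1 p.2) (I ×ˢ Set.univ))
    {t : ℝ} (ht : t ∈ I) (x : E3) (i : Fin 3) :
    HasDerivAt (fun s => pd i (G s) x)
      (pd i (fun y => deriv (fun s => G s y) t) x) t := by
  set F : ℝ × E3 → ℝ := fun p => G p.1 p.2 with hF
  have hop : IsOpen (I ×ˢ (Set.univ : Set E3)) := hI.prod isOpen_univ
  have hAt : ∀ s ∈ I, ∀ y : E3, ContDiffAt ℝ 2 F (s, y) := fun s hs y =>
    hG.contDiffAt (hop.mem_nhds (by simp [hs]))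
  have hD : DifferentiableAt ℝ (fderiv ℝ F) (t, x) :=
    ((hAt t ht x).fderiv_right (le_refl 2)).differentiableAt one_ne_zero
  have h1 : (fun y => deriv (fun s => G s y) t) = fun y => fderiv ℝ F (t, y) (1, 0) := by
    funext y
    exact (hasDerivAt_slice ((hAt t ht y).differentiableAt two_ne_zero)).deriv
  have h2 : pd i (fun y => deriv (fun s => G s y) t) x
      = fderiv ℝ (fderiv ℝ F) (t, x) (1, 0) (0, EuclideanSpace.single i 1) := by
    rw [h1]
    have hin : HasFDerivAt (fun y : E3 => ((t : ℝ), y))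
        (((0 : E3 →L[ℝ] ℝ)).prod (ContinuousLinearMap.id ℝ E3)) x :=
      (hasFDerivAt_const t x).prodMk (hasFDerivAt_id x)
    have hmid : HasFDerivAt (fun y : E3 => fderiv ℝ F (t, y))
        ((fderiv ℝ (fderiv ℝ F) (t, x)).comp
          (((0 : E3 →L[ℝ] ℝ)).prod (ContinuousLinearMap.id ℝ E3))) x :=
      hD.hasFDerivAt.comp x hin
    have happ : HasFDerivAt (fun y : E3 => fderiv ℝ F (t, y) ((1 : ℝ), (0 : E3)))
        ((ContinuousLinearMap.apply ℝ ℝ ((1 : ℝ), (0 : E3))).comp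
          ((fderiv ℝ (fderiv ℝ F) (t, x)).comp
            (((0 : E3 →L[ℝ] ℝ)).prod (ContinuousLinearMap.id ℝ E3)))) x :=
      (ContinuousLinearMap.apply ℝ ℝ ((1 : ℝ), (0 : E3))).hasFDerivAt.comp x hmid
    rw [pd, happ.fderiv]
    rw [(hAt t ht x).isSymmSndFDerivAt (by simp [minSmoothness_of_isRCLikeNormedField]) |>.eq]
    rfl
  rw [h2]
  have hcurve : HasDerivAt (fun s : ℝ => ((s : ℝ), x)) ((1 : ℝ), (0 : E3)) t :=
    (hasDerivAt_id t).prodMk (hasDerivAt_const t x)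
  have hmid' : HasDerivAt (fun s : ℝ => fderiv ℝ F (s, x))
      (fderiv ℝ (fderiv ℝ F) (t, x) (1, 0)) t :=
    hD.hasFDerivAt.comp_hasDerivAt t hcurve
  have happ' : HasDerivAt (fun s : ℝ => fderiv ℝ F (s, x) (0, EuclideanSpace.single i 1))
      (fderiv ℝ (fderiv ℝ F) (t, x) (1, 0) (0, EuclideanSpace.single i 1)) t :=
    (ContinuousLinearMap.apply ℝ ℝ (((0 : ℝ), EuclideanSpace.single i 1) : ℝ × E3)).hasFDerivAt.comp_hasDerivAt
      t hmid'
  have heq : (fun s => pd i (G s) x)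
      =ᶠ[nhds t] (fun s : ℝ => fderiv ℝ F (s, x) (0, EuclideanSpace.single i 1)) := by
    filter_upwards [hI.mem_nhds ht] with s hs
    exact pd_slice ((hAt s hs x).differentiableAt two_ne_zero) i
  exact happ'.congr_of_eventuallyEq heq

lemma hasDerivAt_e3 {f : ℝ → E3} {d : E3} {t : ℝ}
    (h : ∀ k, HasDerivAt (fun s => f s k) (d k) t) : HasDerivAt f d t :=
  ((PiLp.continuousLinearEquiv 2 ℝ (fun _ : Fin 3 => ℝ)).symm.hasFDerivAt).comp_hasDerivAt t
    (hasDerivAt_pi.2 h)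

set_option maxHeartbeats 2000000 in
/-- The quantity `B - ∇×u` satisfies a transport-type identity; in
particular the constraint `B = ∇×u` is formally conserved by the flow. -/
theorem statement2 (c_s : ℝ) (hc : 0 < c_s)
    (I : Set ℝ) (hIopen : IsOpen I) (hIconn : I.OrdConnected)
    (u E B : ℝ → E3 → E3) (ρ : ℝ → E3 → ℝ)
    (hu : ContDiffOn ℝ 2 (fun p : ℝ × E3 => u p.1 p.2) (I ×ˢ Set.univ))
    (hE : ContDiffOn ℝ 2 (fun p : ℝ × E3 => E p.1 p.2) (I ×ˢ Set.univ))
    (hB : ContDiffOn ℝ 2 (fun p : ℝ × E3 => B p.1 p.2) (I ×ˢ Set.univ))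
    (hρ : ContDiffOn ℝ 2 (fun p : ℝ × E3 => ρ p.1 p.2) (I ×ˢ Set.univ))
    (heq1 : ∀ t ∈ I, ∀ x : E3,
      deriv (fun s => u s x) t + fderiv ℝ (u t) x (u t x) =
        -((c_s ^ 2 * ρ t x) • grad (ρ t) x) - E t x - cross (u t x) (B t x))
    (heq2 : ∀ t ∈ I, ∀ x : E3,
      deriv (fun s => B s x) t + curl (E t) x = 0) :
    ∀ t ∈ I, ∀ x : E3,
      deriv (fun s => B s x - curl (u s) x) t =
        curl (fun y => cross (u t y) (B t y - curl (u t) y)) x := by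
  intro t ht x
  have hop : IsOpen (I ×ˢ (Set.univ : Set E3)) := hIopen.prod isOpen_univ
  have hmem : ∀ y : E3, (t, y) ∈ I ×ˢ (Set.univ : Set E3) := fun y => by simp [ht]
  have hucomp : ∀ k : Fin 3, ContDiffOn ℝ 2 (fun p : ℝ × E3 => u p.1 p.2 k) (I ×ˢ Set.univ) :=
    fun k => (EuclideanSpace.proj (𝕜 := ℝ) k).contDiff.comp_contDiffOn hu
  have hBcomp : ∀ k : Fin 3, ContDiffOn ℝ 2 (fun p : ℝ × E3 => B p.1 p.2 k) (I ×ˢ Set.univ) :=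
    fun k => (EuclideanSpace.proj (𝕜 := ℝ) k).contDiff.comp_contDiffOn hB
  have hEcomp : ∀ k : Fin 3, ContDiffOn ℝ 2 (fun p : ℝ × E3 => E p.1 p.2 k) (I ×ˢ Set.univ) :=
    fun k => (EuclideanSpace.proj (𝕜 := ℝ) k).contDiff.comp_contDiffOn hE
  have hsu : ∀ (k : Fin 3) (y : E3), ContDiffAt ℝ 2 (fun z => u t z k) y := fun k y =>
    contDiffAt_slice ((hucomp k).contDiffAt (hop.mem_nhds (hmem y)))
  have hsB : ∀ (k : Fin 3) (y : E3), ContDiffAt ℝ 2 (fun z => B t z k) y := fun k y =>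
    contDiffAt_slice ((hBcomp k).contDiffAt (hop.mem_nhds (hmem y)))
  have hsE : ∀ (k : Fin 3) (y : E3), ContDiffAt ℝ 2 (fun z => E t z k) y := fun k y =>
    contDiffAt_slice ((hEcomp k).contDiffAt (hop.mem_nhds (hmem y)))
  have hsρ : ∀ y : E3, ContDiffAt ℝ 2 (ρ t) y := fun y =>
    contDiffAt_slice (hρ.contDiffAt (hop.mem_nhds (hmem y)))
  have hut : ∀ y : E3, ContDiffAt ℝ 2 (u t) y := fun y =>
    contDiffAt_slice (hu.contDiffAt (hop.mem_nhds (hmem y)))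
  -- differentiability atoms
  have hud0 : Differentiable ℝ (fun z => u t z 0) := fun y => (hsu 0 y).differentiableAt two_ne_zero
  have hud1 : Differentiable ℝ (fun z => u t z 1) := fun y => (hsu 1 y).differentiableAt two_ne_zero
  have hud2 : Differentiable ℝ (fun z => u t z 2) := fun y => (hsu 2 y).differentiableAt two_ne_zero
  have hBd0 : Differentiable ℝ (fun z => B t z 0) := fun y => (hsB 0 y).differentiableAt two_ne_zero
  have hBd1 : Differentiable ℝ (fun z => B t z 1) := fun y => (hsB 1 y).differentiableAt two_ne_zero
  have hBd2 : Differentiable ℝ (fun z => B t z 2) := fun y => (hsB 2 y).differentiableAt two_ne_zero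
  have hEd0 : Differentiable ℝ (fun z => E t z 0) := fun y => (hsE 0 y).differentiableAt two_ne_zero
  have hEd1 : Differentiable ℝ (fun z => E t z 1) := fun y => (hsE 1 y).differentiableAt two_ne_zero
  have hEd2 : Differentiable ℝ (fun z => E t z 2) := fun y => (hsE 2 y).differentiableAt two_ne_zero
  have hρd : Differentiable ℝ (ρ t) := fun y => (hsρ y).differentiableAt two_ne_zero
  have hupd : ∀ j k : Fin 3, Differentiable ℝ (fun y => pd j (fun z => u t z k) y) :=
    fun j k y => pd_differentiableAt (hsu k y) j
  have hupd00 := hupd 0 0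
  have hupd01 := hupd 0 1
  have hupd02 := hupd 0 2
  have hupd10 := hupd 1 0
  have hupd11 := hupd 1 1
  have hupd12 := hupd 1 2
  have hupd20 := hupd 2 0
  have hupd21 := hupd 2 1
  have hupd22 := hupd 2 2
  have hρpd0 : Differentiable ℝ (fun y => pd 0 (ρ t) y) := fun y => pd_differentiableAt (hsρ y) 0
  have hρpd1 : Differentiable ℝ (fun y => pd 1 (ρ t) y) := fun y => pd_differentiableAt (hsρ y) 1
  have hρpd2 : Differentiable ℝ (fun y => pd 2 (ρ t) y) := fun y => pd_differentiableAt (hsρ y) 2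
  have hud0x := hud0 x
  have hud1x := hud1 x
  have hud2x := hud2 x
  have hBd0x := hBd0 x
  have hBd1x := hBd1 x
  have hBd2x := hBd2 x
  have hEd0x := hEd0 x
  have hEd1x := hEd1 x
  have hEd2x := hEd2 x
  -- time derivative of u, componentwise, as explicit spatial expression
  have hAfun : ∀ y : E3, DifferentiableAt ℝ (fun s => u s y) t := fun y =>
    (hasDerivAt_slice (G := fun p : ℝ × E3 => u p.1 p.2)
      ((hu.contDiffAt (hop.mem_nhds (hmem y))).differentiableAt two_ne_zero)).differentiableAt
  have hderiv_u : ∀ (y : E3) (b : Fin 3), deriv (fun s => u s y b) t =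
      (-((c_s ^ 2 * ρ t y) • grad (ρ t) y) - E t y - cross (u t y) (B t y)
        - fderiv ℝ (u t) y (u t y)) b := by
    intro y b
    have h2 : deriv (fun s => u s y) t =
        -((c_s ^ 2 * ρ t y) • grad (ρ t) y) - E t y - cross (u t y) (B t y)
          - fderiv ℝ (u t) y (u t y) := eq_sub_of_add_eq (heq1 t ht y)
    rw [deriv_proj (hAfun y) b, h2]
  have hA0 : (fun y => deriv (fun s => u s y 0) t) = (fun y =>
      -(c_s ^ 2 * ρ t y * pd 0 (ρ t) y) - E t y 0 - (u t y 1 * B t y 2 - u t y 2 * B t y 1)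
        - (u t y 0 * pd 0 (fun z => u t z 0) y + u t y 1 * pd 1 (fun z => u t z 0) y
          + u t y 2 * pd 2 (fun z => u t z 0) y)) := by
    funext y
    rw [hderiv_u y 0]
    simp only [e3_sub_apply, e3_neg_apply, e3_smul_apply]
    rw [fderiv_proj ((hut y).differentiableAt two_ne_zero) (u t y) 0, clm_expand]
    simp only [grad, cross, vec3_zero, vec3_one, vec3_two, ← pd_def]
  have hA1 : (fun y => deriv (fun s => u s y 1) t) = (fun y =>
      -(c_s ^ 2 * ρ t y * pd 1 (ρ t) y) - E t y 1 - (u t y 2 * B t y 0 - u t y 0 * B t y 2)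
        - (u t y 0 * pd 0 (fun z => u t z 1) y + u t y 1 * pd 1 (fun z => u t z 1) y
          + u t y 2 * pd 2 (fun z => u t z 1) y)) := by
    funext y
    rw [hderiv_u y 1]
    simp only [e3_sub_apply, e3_neg_apply, e3_smul_apply]
    rw [fderiv_proj ((hut y).differentiableAt two_ne_zero) (u t y) 1, clm_expand]
    simp only [grad, cross, vec3_zero, vec3_one, vec3_two, ← pd_def]
  have hA2 : (fun y => deriv (fun s => u s y 2) t) = (fun y =>
      -(c_s ^ 2 * ρ t y * pd 2 (ρ t) y) - E t y 2 - (u t y 0 * B t y 1 - u t y 1 * B t y 0)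
        - (u t y 0 * pd 0 (fun z => u t z 2) y + u t y 1 * pd 1 (fun z => u t z 2) y
          + u t y 2 * pd 2 (fun z => u t z 2) y)) := by
    funext y
    rw [hderiv_u y 2]
    simp only [e3_sub_apply, e3_neg_apply, e3_smul_apply]
    rw [fderiv_proj ((hut y).differentiableAt two_ne_zero) (u t y) 2, clm_expand]
    simp only [grad, cross, vec3_zero, vec3_one, vec3_two, ← pd_def]
  -- derivative of B components
  have hBder : ∀ k : Fin 3, HasDerivAt (fun s => B s x k) ((-(curl (E t) x)) k) t := by
    intro k
    have hsl : DifferentiableAt ℝ (fun s => B s x) t :=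
      (hasDerivAt_slice (G := fun p : ℝ × E3 => B p.1 p.2)
        ((hB.contDiffAt (hop.mem_nhds (hmem x))).differentiableAt two_ne_zero)).differentiableAt
    have h1 : HasDerivAt (fun s => B s x k) (deriv (fun s => B s x) t k) t :=
      (EuclideanSpace.proj (𝕜 := ℝ) k).hasFDerivAt.comp_hasDerivAt t hsl.hasDerivAt
    have h2 : deriv (fun s => B s x) t = -(curl (E t) x) :=
      eq_neg_of_add_eq_zero_left (heq2 t ht x)
    rw [← h2]; exact h1
  have hkey : ∀ b i : Fin 3, HasDerivAt (fun s => pd i (fun z => u s z b) x)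
      (pd i (fun y => deriv (fun s => u s y b) t) x) t := fun b i =>
    hasDerivAt_pd_slice (G := fun s z => u s z b) hIopen (hucomp b) ht x i
  -- Clairaut normalizations at x
  have hcu : ∀ k i j : Fin 3, pd i (fun y => pd j (fun z => u t z k) y) x
      = pd j (fun y => pd i (fun z => u t z k) y) x := fun k i j => pd_comm (hsu k x) i j
  have hcρ : ∀ i j : Fin 3, pd i (fun y => pd j (ρ t) y) x = pd j (fun y => pd i (ρ t) y) x :=
    fun i j => pd_comm (hsρ x) i j
  -- assemble
  suffices h : HasDerivAt (fun s => B s x - curl (u s) x)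
      (curl (fun y => cross (u t y) (B t y - curl (u t) y)) x) t from h.deriv
  apply hasDerivAt_e3
  intro k
  fin_cases k
  · show HasDerivAt (fun s => (B s x - curl (u s) x) 0)
      (curl (fun y => cross (u t y) (B t y - curl (u t) y)) x 0) t
    have h := (hBder 0).sub ((hkey 2 1).sub (hkey 1 2))
    have hval : (-(curl (E t) x)) 0 - (pd 1 (fun y => deriv (fun s => u s y 2) t) x
        - pd 2 (fun y => deriv (fun s => u s y 1) t) x)
        = curl (fun y => cross (u t y) (B t y - curl (u t) y)) x 0 := by
      rw [hA1, hA2]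
      simp only [curl, cross, vec3_zero, vec3_one, vec3_two, e3_sub_apply, e3_neg_apply]
      simp (disch := fun_prop) only [pd_sub, pd_add, pd_mul, pd_neg, pd_const_mul, pd_const,
        zero_mul, mul_zero, add_zero, zero_add, zero_sub, sub_zero]
      simp only [hcu 0 1 0, hcu 0 2 0, hcu 0 2 1, hcu 1 1 0, hcu 1 2 0, hcu 1 2 1,
        hcu 2 1 0, hcu 2 2 0, hcu 2 2 1, hcρ 1 0, hcρ 2 0, hcρ 2 1]
      ring
    rw [← hval]
    exact h
  · show HasDerivAt (fun s => (B s x - curl (u s) x) 1)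
      (curl (fun y => cross (u t y) (B t y - curl (u t) y)) x 1) t
    have h := (hBder 1).sub ((hkey 0 2).sub (hkey 2 0))
    have hval : (-(curl (E t) x)) 1 - (pd 2 (fun y => deriv (fun s => u s y 0) t) x
        - pd 0 (fun y => deriv (fun s => u s y 2) t) x)
        = curl (fun y => cross (u t y) (B t y - curl (u t) y)) x 1 := by
      rw [hA0, hA2]
      simp only [curl, cross, vec3_zero, vec3_one, vec3_two, e3_sub_apply, e3_neg_apply]
      simp (disch := fun_prop) only [pd_sub, pd_add, pd_mul, pd_neg, pd_const_mul, pd_const,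
        zero_mul, mul_zero, add_zero, zero_add, zero_sub, sub_zero]
      simp only [hcu 0 1 0, hcu 0 2 0, hcu 0 2 1, hcu 1 1 0, hcu 1 2 0, hcu 1 2 1,
        hcu 2 1 0, hcu 2 2 0, hcu 2 2 1, hcρ 1 0, hcρ 2 0, hcρ 2 1]
      ring
    rw [← hval]
    exact h
  · show HasDerivAt (fun s => (B s x - curl (u s) x) 2)
      (curl (fun y => cross (u t y) (B t y - curl (u t) y)) x 2) t
    have h := (hBder 2).sub ((hkey 1 0).sub (hkey 0 1))
    have hval : (-(curl (E t) x)) 2 - (pd 0 (fun y => deriv (fun s => u s y 1) t) x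
        - pd 1 (fun y => deriv (fun s => u s y 0) t) x)
        = curl (fun y => cross (u t y) (B t y - curl (u t) y)) x 2 := by
      rw [hA0, hA1]
      simp only [curl, cross, vec3_zero, vec3_one, vec3_two, e3_sub_apply, e3_neg_apply]
      simp (disch := fun_prop) only [pd_sub, pd_add, pd_mul, pd_neg, pd_const_mul, pd_const,
        zero_mul, mul_zero, add_zero, zero_add, zero_sub, sub_zero]
      simp only [hcu 0 1 0, hcu 0 2 0, hcu 0 2 1, hcu 1 1 0, hcu 1 2 0, hcu 1 2 1,
        hcu 2 1 0, hcu 2 2 0, hcu 2 2 1, hcρ 1 0, hcρ 2 0, hcρ 2 1]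
      ring
    rw [← hval]
    exact h
end
end

section
/- Fix 0 < c_s < 1. For sign choices ε₁, ε₂ ∈ {+1, −1} and indices k, ℓ, m ∈ {1, c_s}, let φ^{ε₁,ε₂}_{k,ℓ,m}(ξ,η) = ⟨ξ⟩_k + ε₁⟨η⟩_ℓ + ε₂⟨ξ−η⟩_m on ℝ³×ℝ³, and let R be the union, over all such choices, of the sets {(ξ,η) ∈ ℝ³×ℝ³ : φ^{ε₁,ε₂}_{k,ℓ,m}(ξ,η) = 0 and ∇_η φ^{ε₁,ε₂}_{k,ℓ,m}(ξ,η) = 0}. Then R is a bounded (indeed compact) subset of ℝ³×ℝ³; in particular there exists a radius C_R − 1 such that R is contained in the ball of that radius centered at the origin. -/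
noncomputable section

open MeasureTheory Real Filter
open scoped ENNReal NNReal RealInnerProductSpace

/-- The phase `φ(ξ,η) = ⟨ξ⟩_k + ε₁⟨η⟩_l + ε₂⟨ξ-η⟩_m`. -/
def phase (k l m e₁ e₂ : ℝ) (ξ η : E3) : ℝ :=
  jap k ξ + e₁ * jap l η + e₂ * jap m (ξ - η)

/-- The set of all space-time resonances: points where some phase
`φ^{ε₁,ε₂}_{k,l,m}` and its `η`-gradient both vanish. -/
def ResSet (c_s : ℝ) : Set (E3 × E3) :=
  {p | ∃ e₁ e₂ k l m : ℝ, (e₁ = 1 ∨ e₁ = -1) ∧ (e₂ = 1 ∨ e₂ = -1) ∧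
    (k = 1 ∨ k = c_s) ∧ (l = 1 ∨ l = c_s) ∧ (m = 1 ∨ m = c_s) ∧
    phase k l m e₁ e₂ p.1 p.2 = 0 ∧
    fderiv ℝ (fun η => phase k l m e₁ e₂ p.1 η) p.2 = 0}


/-! ### Auxiliary lemmas -/

/-- Scalar Japanese bracket `J a r = √(1 + a²r²)`. -/
def J (a r : ℝ) : ℝ := Real.sqrt (1 + a ^ 2 * r ^ 2)

lemma jap_eq_J (a : ℝ) (x : E3) : jap a x = J a ‖x‖ := rfl

lemma J_sq (a r : ℝ) : (J a r) ^ 2 = 1 + a ^ 2 * r ^ 2 :=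
  Real.sq_sqrt (by positivity)

lemma J_pos (a r : ℝ) : 0 < J a r := Real.sqrt_pos.2 (by positivity)

lemma J_one_le (a r : ℝ) : 1 ≤ J a r := by
  rw [show (1:ℝ) = Real.sqrt 1 by simp]
  exact Real.sqrt_le_sqrt (by nlinarith [sq_nonneg (a*r)])

lemma J_gt (a r : ℝ) (ha : 0 ≤ a) (hr : 0 ≤ r) : a * r < J a r := by
  nlinarith [J_sq a r, J_pos a r, mul_nonneg ha hr]

lemma J_le (a r : ℝ) (ha : 0 ≤ a) (hr : 0 ≤ r) : J a r ≤ 1 + a * r := by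
  rw [show 1 + a*r = Real.sqrt ((1+a*r)^2) from (Real.sqrt_sq (by positivity)).symm]
  exact Real.sqrt_le_sqrt (by nlinarith [mul_nonneg ha hr])

lemma J_add_le (a x y : ℝ) (ha : 0 ≤ a) (hx : 0 ≤ x) (hy : 0 ≤ y) :
    J a (x + y) ≤ J a x + a * y := by
  have h1 := J_sq a x
  have h2 := J_gt a x ha hx
  have h3 := J_pos a x
  rw [show J a x + a*y = Real.sqrt ((J a x + a*y)^2) from
    (Real.sqrt_sq (by nlinarith [mul_nonneg ha hy])).symm]
  exact Real.sqrt_le_sqrt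
    (by nlinarith [mul_nonneg ha hy, mul_nonneg (mul_nonneg ha hy) (mul_nonneg ha hx)])

lemma J_mono_r (a x y : ℝ) (hxy : x ≤ y) (hx : 0 ≤ x) : J a x ≤ J a y := by
  have h : x^2 ≤ y^2 := by nlinarith
  exact Real.sqrt_le_sqrt (by nlinarith [mul_le_mul_of_nonneg_left h (sq_nonneg a)])

lemma J_mono_a (a b r : ℝ) (hab : a ≤ b) (ha : 0 ≤ a) : J a r ≤ J b r := by
  have h : a^2 ≤ b^2 := by nlinarith
  exact Real.sqrt_le_sqrt (by nlinarith [mul_le_mul_of_nonneg_left h (sq_nonneg r)])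

lemma jap_pos (a : ℝ) (x : E3) : 0 < jap a x := Real.sqrt_pos.2 (by positivity)

/-! ### The derivative of the phase in `η` -/

lemma hasFDerivAt_jap (a : ℝ) (x : E3) :
    HasFDerivAt (jap a) ((a ^ 2 / jap a x) • (innerSL ℝ x : E3 →L[ℝ] ℝ)) x := by
  have h0 : (1 + a ^ 2 * ‖x‖ ^ 2) ≠ 0 := by positivity
  have h1 : HasFDerivAt (fun y : E3 => 1 + a ^ 2 * ‖y‖ ^ 2)
      ((a ^ 2) • (2 • (innerSL ℝ x : E3 →L[ℝ] ℝ))) x := by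
    have h2 : HasFDerivAt (fun y : E3 => ‖y‖ ^ 2) (2 • (innerSL ℝ x : E3 →L[ℝ] ℝ)) x :=
      (hasStrictFDerivAt_norm_sq x).hasFDerivAt
    simpa using (h2.const_mul (a ^ 2)).const_add 1
  have h3 := h1.sqrt h0
  refine (h3 : HasFDerivAt (jap a) _ x).congr_fderiv ?_
  ext y
  have hj : jap a x ≠ 0 := (jap_pos a x).ne'
  simp only [ContinuousLinearMap.coe_smul', Pi.smul_apply, smul_eq_mul,
    ContinuousLinearMap.smul_apply]
  rw [show Real.sqrt (1 + a ^ 2 * ‖x‖ ^ 2) = jap a x from rfl]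
  field_simp
  ring

lemma hasFDerivAt_phase (k l m e₁ e₂ : ℝ) (ξ η : E3) :
    HasFDerivAt (fun η => phase k l m e₁ e₂ ξ η)
      ((e₁ * l ^ 2 / jap l η) • (innerSL ℝ η : E3 →L[ℝ] ℝ)
        - (e₂ * m ^ 2 / jap m (ξ - η)) • (innerSL ℝ (ξ - η) : E3 →L[ℝ] ℝ)) η := by
  have h1 := hasFDerivAt_jap l η
  have hsub : HasFDerivAt (fun η : E3 => ξ - η) (-(ContinuousLinearMap.id ℝ E3)) η := by
    exact (hasFDerivAt_id (𝕜 := ℝ) η).const_sub ξ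
  have h2 := (hasFDerivAt_jap m (ξ - η)).comp η hsub
  have h3 := ((h1.const_mul e₁).add (h2.const_mul e₂)).const_add (jap k ξ)
  have hfun : (fun x : E3 => jap k ξ + (e₁ * jap l x + e₂ * ((jap m ∘ (fun η : E3 => ξ - η)) x)))
      = fun η => phase k l m e₁ e₂ ξ η := by
    funext x
    simp only [Function.comp_apply, phase]
    ring
  replace h3 : HasFDerivAt (fun x : E3 => jap k ξ + (e₁ * jap l x + e₂ * ((jap m ∘ (fun η : E3 => ξ - η)) x))) _ η := h3
  rw [hfun] at h3
  have hD : (e₁ • ((l ^ 2 / jap l η) • (innerSL ℝ η : E3 →L[ℝ] ℝ)) +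
      e₂ • (((m ^ 2 / jap m (ξ - η)) • (innerSL ℝ (ξ - η) : E3 →L[ℝ] ℝ)).comp
        (-(ContinuousLinearMap.id ℝ E3))))
      = (e₁ * l ^ 2 / jap l η) • (innerSL ℝ η : E3 →L[ℝ] ℝ)
        - (e₂ * m ^ 2 / jap m (ξ - η)) • (innerSL ℝ (ξ - η) : E3 →L[ℝ] ℝ) := by
    ext y
    simp only [ContinuousLinearMap.add_apply, ContinuousLinearMap.smul_apply,
      ContinuousLinearMap.coe_comp', Function.comp_apply, ContinuousLinearMap.neg_apply,
      ContinuousLinearMap.coe_id', id_eq, ContinuousLinearMap.coe_sub', Pi.sub_apply,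
      smul_eq_mul, innerSL_apply_apply, inner_neg_right]
    ring
  rw [hD] at h3
  exact h3

lemma grad_zero_iff (k l m e₁ e₂ : ℝ) (ξ η : E3) :
    fderiv ℝ (fun η => phase k l m e₁ e₂ ξ η) η = 0 ↔
      (e₁ * l ^ 2 / jap l η) • η = (e₂ * m ^ 2 / jap m (ξ - η)) • (ξ - η) := by
  rw [(hasFDerivAt_phase k l m e₁ e₂ ξ η).fderiv]
  set c₁ := e₁ * l ^ 2 / jap l η
  set c₂ := e₂ * m ^ 2 / jap m (ξ - η)
  have key : (c₁ • (innerSL ℝ η : E3 →L[ℝ] ℝ) - c₂ • (innerSL ℝ (ξ - η) : E3 →L[ℝ] ℝ))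
      = innerSL ℝ (c₁ • η - c₂ • (ξ - η)) := by
    ext y
    simp only [ContinuousLinearMap.coe_sub', Pi.sub_apply, ContinuousLinearMap.smul_apply,
      smul_eq_mul, innerSL_apply_apply, inner_sub_left, real_inner_smul_left]
  rw [key]
  constructor
  · intro h
    have h2 : (innerSL ℝ (c₁ • η - c₂ • (ξ - η))) (c₁ • η - c₂ • (ξ - η)) = 0 := by
      rw [h]; rfl
    rw [innerSL_apply_apply] at h2
    have h3 : c₁ • η - c₂ • (ξ - η) = 0 := inner_self_eq_zero.1 h2
    exact sub_eq_zero.1 h3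
  · intro h
    rw [sub_eq_zero.2 h]
    exact map_zero (innerSL ℝ)

/-! ### Scalar resonance analysis -/

lemma ps_bound (c p q : ℝ) (hc0 : 0 < c) (hc1 : c < 1) (hp : 0 ≤ p) (hq : 0 ≤ q)
    (hs : p * J c q = c ^ 2 * q * J 1 p) : p * (1 - c) ≤ 1 := by
  have h1 := J_sq c q
  have h2 := J_sq 1 p
  have hE : p ^ 2 * (1 + c ^ 2 * q ^ 2) = c ^ 4 * q ^ 2 * (1 + p ^ 2) := by
    have e1 : (p * J c q) ^ 2 = (c ^ 2 * q * J 1 p) ^ 2 := by rw [hs]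
    linear_combination e1 - p^2*h1 + c^4*q^2*h2
  have hE' : p ^ 2 * (1 + c ^ 2 * q ^ 2 * (1 - c ^ 2)) = c ^ 4 * q ^ 2 := by
    linear_combination hE
  have hpos : (0:ℝ) ≤ c ^ 2 * q ^ 2 * (1 - c ^ 2) :=
    mul_nonneg (by positivity) (by nlinarith)
  have h5 : p ^ 2 * (1 - c ^ 2) ≤ c ^ 2 := by nlinarith [hE', hpos, sq_nonneg p]
  have h6 : (p * (1 - c)) ^ 2 ≤ c ^ 2 := by nlinarith [sq_nonneg p]
  nlinarith [h6]

lemma bound_helper (c p A : ℝ) (hc0 : 0 < c) (hc1 : c < 1) (hp : 0 ≤ p)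
    (hA2 : p * A ≤ 2) (hA1 : (c * (1 - c)) ^ 2 ≤ A) : p ≤ 2 / (c * (1 - c)) ^ 2 := by
  rw [le_div_iff₀ (pow_pos (mul_pos hc0 (by linarith)) 2)]
  calc p * (c * (1 - c)) ^ 2 ≤ p * A := mul_le_mul_of_nonneg_left hA1 hp
  _ ≤ 2 := hA2

lemma eq_of_s_rel (a p q : ℝ) (ha : 0 < a) (hp : 0 ≤ p) (hq : 0 ≤ q)
    (hs : a ^ 2 * p * J a q = a ^ 2 * q * J a p) : p = q := by
  have e1 : (a ^ 2 * p * J a q) ^ 2 = (a ^ 2 * q * J a p) ^ 2 := by rw [hs]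
  have h1 := J_sq a p
  have h2 := J_sq a q
  have e2 : a ^ 4 * (p ^ 2 * (1 + a ^ 2 * q ^ 2)) = a ^ 4 * (q ^ 2 * (1 + a ^ 2 * p ^ 2)) := by
    linear_combination e1 - a^4*p^2*h2 + a^4*q^2*h1
  have e3 : p ^ 2 * (1 + a ^ 2 * q ^ 2) = q ^ 2 * (1 + a ^ 2 * p ^ 2) :=
    mul_left_cancel₀ (by positivity) e2
  have e4 : p ^ 2 = q ^ 2 := by linear_combination e3
  exact (sq_eq_sq₀ hp hq).1 e4

lemma scalar_bound (c k l m e₁ e₂ p q r : ℝ) (hc0 : 0 < c) (hc1 : c < 1)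
    (hk : k = 1 ∨ k = c) (hl : l = 1 ∨ l = c) (hm : m = 1 ∨ m = c)
    (he₁ : e₁ = 1 ∨ e₁ = -1) (he₂ : e₂ = 1 ∨ e₂ = -1)
    (hp : 0 ≤ p) (hq : 0 ≤ q) (hr : 0 ≤ r)
    (hr1 : e₁ = e₂ → r = p + q) (hr2 : e₁ ≠ e₂ → r = |p - q|)
    (hs : l ^ 2 * p * J m q = m ^ 2 * q * J l p)
    (hφ : J k r + e₁ * J l p + e₂ * J m q = 0) :
    p ≤ 2 / (c * (1 - c)) ^ 2 := by
  have hc1' : (0:ℝ) ≤ 1 - c := by linarith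
  have ht0 : 0 < c * (1 - c) := mul_pos hc0 (by linarith)
  have ht1 : c * (1 - c) ≤ 1 := by linarith [sq_nonneg c]
  have hcc3 : (c * (1 - c)) ^ 2 ≤ c * (1 - c) := by
    linarith [mul_le_mul_of_nonneg_right ht1 ht0.le]
  have hcc : (c * (1 - c)) ^ 2 ≤ 1 - c :=
    le_trans hcc3 (by linarith [mul_le_mul_of_nonneg_right hc1.le hc1'])
  have hcc2 : (c * (1 - c)) ^ 2 ≤ 1 - c ^ 2 :=
    le_trans hcc (by linarith [mul_le_mul_of_nonneg_right hc1.le hc0.le])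
  rcases he₁ with rfl | rfl <;> rcases he₂ with rfl | rfl
  · -- (+1, +1): impossible
    exfalso
    linarith [J_one_le k r, J_one_le l p, J_one_le m q]
  · -- (+1, -1) : case C : J m q = J k r + J l p
    rcases hl with rfl | hl
    · rcases hm with rfl | hm
      · -- l = m = 1
        exfalso
        have hpq := eq_of_s_rel 1 p q one_pos hp hq hs
        subst hpq
        have : J k r = 0 := by linarith
        linarith [J_one_le k r]
      · -- l = 1, m = c
        rw [hm] at hs
        have h := ps_bound c p q hc0 hc1 hp hq (by linear_combination hs)
        exact bound_helper c p (1 - c) hc0 hc1 hp (by linarith) hcc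
    · rcases hm with rfl | hm
      · -- l = c, m = 1
        rw [hl] at hs hφ
        have hC : J 1 q = J k r + J c p := by linarith
        have hq1 : q * (1 - c) ≤ 1 := ps_bound c q p hc0 hc1 hq hp (by linear_combination -hs)
        have h1 : J c p ≤ J 1 q - 1 := by linarith [J_one_le k r]
        have h2 := J_le 1 q (by norm_num) hq
        have h3 := J_gt c p hc0.le hp
        have h4 : c * p ≤ q := by linarith
        exact bound_helper c p (c * (1 - c)) hc0 hc1 hp
          (by linarith [mul_le_mul_of_nonneg_right h4 hc1']) hcc3
      · -- l = m = c
        rw [hl] at hs hφ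
        rw [hm] at hs hφ
        exfalso
        have hpq := eq_of_s_rel c p q hc0 hp hq hs
        subst hpq
        have : J k r = 0 := by linarith
        linarith [J_one_le k r]
  · -- (-1, +1) : case B : J l p = J k r + J m q
    have hre : r = |p - q| := hr2 (by norm_num)
    rcases hl with rfl | hl
    · rcases hm with rfl | hm
      · -- l = m = 1
        exfalso
        have hpq := eq_of_s_rel 1 p q one_pos hp hq hs
        subst hpq
        have : J k r = 0 := by linarith
        linarith [J_one_le k r]
      · -- l = 1, m = c
        rw [hm] at hs
        have h := ps_bound c p q hc0 hc1 hp hq (by linear_combination hs)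
        exact bound_helper c p (1 - c) hc0 hc1 hp (by linarith) hcc
    · rcases hm with rfl | hm
      · -- l = c, m = 1
        rw [hl] at hs hφ
        have hB : J c p = J k r + J 1 q := by linarith
        rcases hk with rfl | hk
        · -- k = 1
          have h1 := J_gt 1 r (by norm_num) hr
          have h2 := J_gt 1 q (by norm_num) hq
          have h3 : p - q ≤ r := by rw [hre]; exact le_abs_self _
          have hgt : p < J c p := by linarith
          have e1 : p * p ≤ p * J c p := mul_le_mul_of_nonneg_left hgt.le hp
          have e2 : p * J c p < J c p * J c p := mul_lt_mul_of_pos_right hgt (J_pos c p)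
          have h5 : p ^ 2 * (1 - c ^ 2) < 1 := by nlinarith [J_sq c p]
          have h6 : (p * (1 - c)) ^ 2 ≤ 1 := by
            nlinarith [mul_nonneg (mul_nonneg (sq_nonneg p) hc0.le) hc1']
          have h7 : p * (1 - c) ≤ 1 := by nlinarith [h6]
          exact bound_helper c p (1 - c) hc0 hc1 hp (by linarith) hcc
        · -- k = c : impossible
          rw [hk] at hB
          exfalso
          rcases le_total q p with hqp | hpq
          · have hre' : r = p - q := by rw [hre]; exact abs_of_nonneg (by linarith)
            have h1 := J_add_le c (p - q) q hc0.le (by linarith) hq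
            rw [show p - q + q = p by ring] at h1
            have h2 := J_gt 1 q (by norm_num) hq
            rw [hre'] at hB
            linarith [mul_nonneg hq hc1']
          · have h1 : J c q ≤ J 1 q := J_mono_a c 1 q hc1.le hc0.le
            have h2 : J c p ≤ J c q := J_mono_r c p q hpq hp
            have h3 := J_one_le c r
            linarith
      · -- l = m = c
        rw [hl] at hs hφ
        rw [hm] at hs hφ
        exfalso
        have hpq := eq_of_s_rel c p q hc0 hp hq hs
        subst hpq
        have : J k r = 0 := by linarith
        linarith [J_one_le k r]
  · -- (-1, -1) : case A : J k r = J l p + J m q, r = p + q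
    have hre : r = p + q := hr1 rfl
    subst hre
    rcases hl with rfl | hl
    · rcases hm with rfl | hm
      · -- l = m = 1
        rcases hk with rfl | hk
        · exfalso
          have h1 := J_add_le 1 p q (by norm_num) hp hq
          have h2 := J_gt 1 q (by norm_num) hq
          linarith
        · -- k = c
          rw [hk] at hφ
          have h1 := J_le c (p + q) hc0.le (by linarith)
          have h2 := J_gt 1 p (by norm_num) hp
          have h3 := J_gt 1 q (by norm_num) hq
          have h4 : (p + q) * (1 - c) ≤ 1 := by linarith
          exact bound_helper c p (1 - c) hc0 hc1 hp
            (by linarith [mul_nonneg hq hc1']) hcc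
      · -- l = 1, m = c
        rw [hm] at hs
        have h := ps_bound c p q hc0 hc1 hp hq (by linear_combination hs)
        exact bound_helper c p (1 - c) hc0 hc1 hp (by linarith) hcc
    · rcases hm with rfl | hm
      · -- l = c, m = 1
        rw [hl] at hs hφ
        rcases hk with rfl | hk
        · -- k = 1
          have hA : J 1 (p + q) = J c p + J 1 q := by linarith
          have h1 := J_gt 1 (p + q) (by norm_num) (by linarith)
          have h2 := J_le 1 q (by norm_num) hq
          have hgt : p - 1 < J c p := by linarith
          rcases le_or_gt p 1 with hp1 | hp1
          · exact bound_helper c p (1 - c ^ 2) hc0 hc1 hp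
              (by linarith [mul_nonneg hp (sq_nonneg c)]) hcc2
          · have e1 : (p - 1) * (p - 1) < (p - 1) * J c p :=
              mul_lt_mul_of_pos_left hgt (by linarith)
            have e2 : (p - 1) * J c p < J c p * J c p :=
              mul_lt_mul_of_pos_right hgt (J_pos c p)
            have hsq : (p - 1) ^ 2 < (J c p) ^ 2 := by nlinarith [e1, e2]
            have h5 : p * (1 - c ^ 2) ≤ 2 := by nlinarith [hsq, J_sq c p, hp1]
            exact bound_helper c p (1 - c ^ 2) hc0 hc1 hp h5 hcc2
        · -- k = c : impossible
          rw [hk] at hφ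
          exfalso
          have h1 := J_add_le c p q hc0.le hp hq
          have h2 := J_gt 1 q (by norm_num) hq
          linarith [mul_nonneg hq hc1']
      · -- l = m = c
        rw [hl] at hs hφ
        rw [hm] at hs hφ
        rcases hk with rfl | hk
        · -- k = 1
          have h1 := J_gt 1 (p + q) (by norm_num) (by linarith : (0:ℝ) ≤ p + q)
          have h2 := J_le c p hc0.le hp
          have h3 := J_le c q hc0.le hq
          have h4 : (p + q) * (1 - c) ≤ 2 := by linarith
          exact bound_helper c p (1 - c) hc0 hc1 hp
            (by linarith [mul_nonneg hq hc1']) hcc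
        · -- k = c : impossible
          rw [hk] at hφ
          exfalso
          have h1 := J_add_le c p q hc0.le hp hq
          have h2 := J_gt c q hc0.le hq
          linarith

/-! ### From the vector conditions to the scalar ones -/

lemma norms_of_grad (a b : ℝ) (ξ η : E3) (hgrad : a • η = b • (ξ - η)) (hb : b ≠ 0) :
    (0 < a / b → ‖ξ‖ = ‖η‖ + ‖ξ - η‖) ∧ (a / b ≤ 0 → ‖ξ‖ = |‖η‖ - ‖ξ - η‖|) := by
  have hvt : ξ - η = (a / b) • η := by
    rw [div_eq_inv_mul, ← smul_smul, hgrad, inv_smul_smul₀ hb]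
  set t := a / b with htdef
  have hξ : ξ = (1 + t) • η := by
    have h0 : ξ = η + (ξ - η) := by abel
    rw [h0, hvt, add_smul, one_smul]
  constructor
  · intro ht
    rw [hvt, hξ, norm_smul, norm_smul, Real.norm_eq_abs, Real.norm_eq_abs,
      abs_of_pos ht, abs_of_pos (by linarith : (0:ℝ) < 1 + t)]
    ring
  · intro ht
    rw [hvt, hξ, norm_smul, norm_smul, Real.norm_eq_abs, Real.norm_eq_abs,
      abs_of_nonpos ht,
      show ‖η‖ - -t * ‖η‖ = (1 + t) * ‖η‖ from by ring, abs_mul,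
      abs_of_nonneg (norm_nonneg η)]

lemma sign_fact (e₁ e₂ : ℝ) (he₁ : e₁ = 1 ∨ e₁ = -1) (he₂ : e₂ = 1 ∨ e₂ = -1)
    (l m : ℝ) (hl : 0 < l) (hm : 0 < m) (η v : E3) :
    (e₁ = e₂ → 0 < (e₁ * l ^ 2 / jap l η) / (e₂ * m ^ 2 / jap m v)) ∧
    (e₁ ≠ e₂ → (e₁ * l ^ 2 / jap l η) / (e₂ * m ^ 2 / jap m v) ≤ 0) := by
  have hL := jap_pos l η
  have hM := jap_pos m v
  constructor
  · intro h
    rcases he₁ with rfl | rfl <;> rcases he₂ with rfl | rfl <;>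
      [skip; exact absurd h (by norm_num); exact absurd h (by norm_num); skip]
    · exact div_pos (by positivity) (by positivity)
    · rw [show (-1 : ℝ) * l ^ 2 / jap l η = -(l ^ 2 / jap l η) by ring,
        show (-1 : ℝ) * m ^ 2 / jap m v = -(m ^ 2 / jap m v) by ring, neg_div_neg_eq]
      exact div_pos (by positivity) (by positivity)
  · intro h
    rcases he₁ with rfl | rfl <;> rcases he₂ with rfl | rfl <;>
      [exact absurd rfl h; skip; skip; exact absurd rfl h]
    · apply div_nonpos_of_nonneg_of_nonpos (by positivity)
      rw [show (-1 : ℝ) * m ^ 2 / jap m v = -(m ^ 2 / jap m v) by ring]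
      simp only [Left.neg_nonpos_iff]
      positivity
    · apply div_nonpos_of_nonpos_of_nonneg _ (by positivity)
      rw [show (-1 : ℝ) * l ^ 2 / jap l η = -(l ^ 2 / jap l η) by ring]
      simp only [Left.neg_nonpos_iff]
      positivity

lemma resSet_bound (c_s : ℝ) (hc0 : 0 < c_s) (hc1 : c_s < 1) :
    ∀ x ∈ ResSet c_s, ‖x.1‖ ≤ 2 * (2 / (c_s * (1 - c_s)) ^ 2)
      ∧ ‖x.2‖ ≤ 2 / (c_s * (1 - c_s)) ^ 2 := by
  rintro ⟨ξ, η⟩ ⟨e₁, e₂, k, l, m, he₁, he₂, hk, hl, hm, hφ0, hgrad⟩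
  have hl0 : 0 < l := by rcases hl with h | h <;> simp [h, hc0]
  have hm0 : 0 < m := by rcases hm with h | h <;> simp [h, hc0]
  have hL := jap_pos l η
  have hM := jap_pos m (ξ - η)
  have he₂0 : e₂ ≠ 0 := by rcases he₂ with rfl | rfl <;> norm_num
  rw [grad_zero_iff] at hgrad
  have hb0 : e₂ * m ^ 2 / jap m (ξ - η) ≠ 0 :=
    div_ne_zero (mul_ne_zero he₂0 (by positivity)) hM.ne'
  have hnorms := norms_of_grad _ _ ξ η hgrad hb0
  have hsign := sign_fact e₁ e₂ he₁ he₂ l m hl0 hm0 η (ξ - η)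
  set p := ‖η‖ with hpdef
  set q := ‖ξ - η‖ with hqdef
  set r := ‖ξ‖ with hrdef
  have hp : 0 ≤ p := norm_nonneg _
  have hq : 0 ≤ q := norm_nonneg _
  have hr : 0 ≤ r := norm_nonneg _
  have hr1 : e₁ = e₂ → r = p + q := fun h => hnorms.1 (hsign.1 h)
  have hr2 : e₁ ≠ e₂ → r = |p - q| := fun h => hnorms.2 (hsign.2 h)
  have hs : l ^ 2 * p * J m q = m ^ 2 * q * J l p := by
    have hn := congrArg norm hgrad
    rw [norm_smul, norm_smul, Real.norm_eq_abs, Real.norm_eq_abs, abs_div, abs_div,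
      abs_mul, abs_mul] at hn
    have ha1 : |e₁| = 1 := by rcases he₁ with rfl | rfl <;> norm_num
    have ha2 : |e₂| = 1 := by rcases he₂ with rfl | rfl <;> norm_num
    rw [ha1, ha2, abs_of_nonneg (sq_nonneg l), abs_of_nonneg (sq_nonneg m),
      abs_of_pos hL, abs_of_pos hM, one_mul, one_mul] at hn
    rw [div_mul_eq_mul_div, div_mul_eq_mul_div, div_eq_div_iff hL.ne' hM.ne'] at hn
    rw [show J m q = jap m (ξ - η) from rfl, show J l p = jap l η from rfl]
    exact hn
  have hφ : J k r + e₁ * J l p + e₂ * J m q = 0 := hφ0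
  have hp2 := scalar_bound c_s k l m e₁ e₂ p q r hc0 hc1 hk hl hm he₁ he₂ hp hq hr hr1 hr2 hs hφ
  have hq2 := scalar_bound c_s k m l e₂ e₁ q p r hc0 hc1 hk hm hl he₂ he₁ hq hp hr
    (fun h => by rw [hr1 h.symm]; ring)
    (fun h => by rw [hr2 (Ne.symm h), abs_sub_comm])
    hs.symm (by linarith)
  have hrpq : r ≤ p + q := by
    rcases eq_or_ne e₁ e₂ with h | h
    · rw [hr1 h]
    · rw [hr2 h]
      exact abs_le.2 ⟨by linarith, by linarith⟩
  exact ⟨by simpa using (hrpq.trans (by linarith)), hp2⟩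

/-! ### Topological part -/

def SS (e₁ e₂ k l m : ℝ) : Set (E3 × E3) :=
  {x | phase k l m e₁ e₂ x.1 x.2 = 0 ∧
    (e₁ * l ^ 2 / jap l x.2) • x.2 = (e₂ * m ^ 2 / jap m (x.1 - x.2)) • (x.1 - x.2)}

lemma continuous_jap (a : ℝ) : Continuous (jap a) := by
  apply Real.continuous_sqrt.comp
  continuity

lemma isClosed_SS (e₁ e₂ k l m : ℝ) : IsClosed (SS e₁ e₂ k l m) := by
  apply IsClosed.inter
  · apply isClosed_eq _ continuous_const
    exact (((continuous_jap k).comp continuous_fst).add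
      (continuous_const.mul ((continuous_jap l).comp continuous_snd))).add
      (continuous_const.mul ((continuous_jap m).comp (continuous_fst.sub continuous_snd)))
  · apply isClosed_eq
    · exact (continuous_const.div ((continuous_jap l).comp continuous_snd)
        (fun x => (jap_pos l x.2).ne')).smul continuous_snd
    · exact (continuous_const.div
        ((continuous_jap m).comp (continuous_fst.sub continuous_snd))
        (fun x => (jap_pos m (x.1 - x.2)).ne')).smul (continuous_fst.sub continuous_snd)

lemma resSet_eq_union (c_s : ℝ) :
    ResSet c_s = ⋃ e₁ ∈ ({1, -1} : Set ℝ), ⋃ e₂ ∈ ({1, -1} : Set ℝ),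
      ⋃ k ∈ ({1, c_s} : Set ℝ), ⋃ l ∈ ({1, c_s} : Set ℝ), ⋃ m ∈ ({1, c_s} : Set ℝ),
        SS e₁ e₂ k l m := by
  ext x
  simp only [ResSet, Set.mem_setOf_eq, Set.mem_iUnion, Set.mem_insert_iff,
    Set.mem_singleton_iff, exists_prop, SS]
  constructor
  · rintro ⟨e₁, e₂, k, l, m, h1, h2, h3, h4, h5, h6, h7⟩
    exact ⟨e₁, h1, e₂, h2, k, h3, l, h4, m, h5, h6, (grad_zero_iff k l m e₁ e₂ x.1 x.2).1 h7⟩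
  · rintro ⟨e₁, h1, e₂, h2, k, h3, l, h4, m, h5, h6, h7⟩
    exact ⟨e₁, e₂, k, l, m, h1, h2, h3, h4, h5, h6, (grad_zero_iff k l m e₁ e₂ x.1 x.2).2 h7⟩

lemma isClosed_resSet (c_s : ℝ) : IsClosed (ResSet c_s) := by
  rw [resSet_eq_union]
  have hfin : ({1, -1} : Set ℝ).Finite := (Set.finite_singleton _).insert _
  have hfin2 : ∀ a : ℝ, ({1, a} : Set ℝ).Finite := fun a => (Set.finite_singleton _).insert _
  refine Set.Finite.isClosed_biUnion hfin fun e₁ _ => ?_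
  refine Set.Finite.isClosed_biUnion hfin fun e₂ _ => ?_
  refine Set.Finite.isClosed_biUnion (hfin2 c_s) fun k _ => ?_
  refine Set.Finite.isClosed_biUnion (hfin2 c_s) fun l _ => ?_
  refine Set.Finite.isClosed_biUnion (hfin2 c_s) fun m _ => ?_
  exact isClosed_SS e₁ e₂ k l m


/-- The set of space-time resonances is compact, hence contained in a
ball of radius `C_R - 1`. -/
theorem statement8 (c_s : ℝ) (hc0 : 0 < c_s) (hc1 : c_s < 1) :
    IsCompact (ResSet c_s) ∧
      ∃ C_R : ℝ, 1 < C_R ∧ ResSet c_s ⊆ Metric.ball 0 (C_R - 1) := by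
  set B : ℝ := 2 / (c_s * (1 - c_s)) ^ 2 with hBdef
  have hBpos : 0 < B := by
    apply div_pos (by norm_num)
    exact pow_pos (mul_pos hc0 (by linarith)) 2
  have hsub : ResSet c_s ⊆ Metric.ball 0 (2 * B + 1) := by
    intro x hx
    obtain ⟨h1, h2⟩ := resSet_bound c_s hc0 hc1 x hx
    rw [Metric.mem_ball, dist_zero_right, Prod.norm_def]
    have : max ‖x.1‖ ‖x.2‖ ≤ 2 * B := max_le h1 (by linarith)
    linarith
  constructor
  · exact Metric.isCompact_of_isClosed_isBounded (isClosed_resSet c_s)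
      (Metric.isBounded_ball.subset hsub)
  · exact ⟨2 * B + 2, by linarith, by
      simpa [show 2 * B + 2 - 1 = 2 * B + 1 by ring] using hsub⟩
end
end
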